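/- If r ≤ 5040 satisfies G(r) ≥ e^γ, and p ≥ 11 is prime, then G(pr) < e^γ. -/

import Mathlib

noncomputable def G (n : ℕ) : ℝ := (ArithmeticFunction.sigma 1 n : ℝ) / (n * Real.log (Real.log n))

lemma log_lb (t : ℝ) (h : |t| ≤ 2/5) :
    t - t^2/2 + t^3/3 - t^4/4 + t^5/5 - t^6/6 + t^7/7 - 5/3*t^8 ≤ Real.log (1+t) := by
  have h1 : |(-t)| < 1 := by rw [abs_neg]; linarith [abs_nonneg t]
  have H := Real.abs_log_sub_add_sum_range_le h1 7
  rw [abs_le] at H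
  have h2 := H.1
  have ha : |t| ^ 8 = t ^ 8 := by rw [← abs_pow, abs_of_nonneg (by positivity)]
  have herr : |(-t)| ^ (7+1) / (1 - |(-t)|) ≤ 5/3 * t^8 := by
    rw [abs_neg, ha, div_le_iff₀ (by rw [abs_neg] at h1; linarith)]
    nlinarith [pow_nonneg (abs_nonneg t) 8, pow_le_pow_left₀ (abs_nonneg t) h 8]
  have hs : ∑ i ∈ Finset.range 7, (-t) ^ (i + 1) / (i + 1) =
      -t + t^2/2 - t^3/3 + t^4/4 - t^5/5 + t^6/6 - t^7/7 := by
    simp [Finset.sum_range_succ]; ring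
  rw [hs] at h2
  have he : Real.log (1 - -t) = Real.log (1+t) := by ring_nf
  rw [he] at h2
  linarith

lemma log_ge_aux (N : ℝ) (k : ℕ) (t : ℝ) (c : ℝ) (hN : N = 2^k * (1+t)) (ht : |t| ≤ 2/5)
    (hc : c ≤ k * 0.6931471803 + (t - t^2/2 + t^3/3 - t^4/4 + t^5/5 - t^6/6 + t^7/7 - 5/3*t^8)) :
    c ≤ Real.log N := by
  have habs := abs_le.mp ht
  have hpos : (0:ℝ) < 1 + t := by linarith [habs.1]
  rw [hN, Real.log_mul (by positivity) (ne_of_gt hpos), Real.log_pow]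
  have l2 := Real.log_two_gt_d9
  have hlb := log_lb t ht
  have hk : (k:ℝ) * 0.6931471803 ≤ k * Real.log 2 :=
    mul_le_mul_of_nonneg_left (le_of_lt l2) (Nat.cast_nonneg k)
  linarith

lemma loglog_mono (x y : ℝ) (h3 : 3 ≤ x) (hxy : x ≤ y) :
    Real.log (Real.log x) ≤ Real.log (Real.log y) := by
  have h1 : (0:ℝ) < Real.log x := Real.log_pos (by linarith)
  exact Real.log_le_log h1 (Real.log_le_log (by linarith) hxy)

lemma harm63 : (4.7282659 : ℚ) ≤ harmonic 63 := by
  norm_num [harmonic, Finset.sum_range_succ]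

lemma gamma_gt : (0.5693828 : ℝ) < Real.eulerMascheroniConstant := by
  have h := Real.eulerMascheroniSeq_lt_eulerMascheroniConstant 63
  refine lt_of_lt_of_le ?_ h.le
  unfold Real.eulerMascheroniSeq
  have hh : (4.7282659 : ℝ) ≤ (harmonic 63 : ℚ) := by
    have h := (Rat.cast_le (K:=ℝ)).mpr harm63
    norm_num at h ⊢
  have hlog : Real.log ((63:ℕ) + 1) < 4.1588830848 := by
    have h64 : ((63:ℕ):ℝ) + 1 = 2^(6:ℕ) := by norm_num
    rw [h64, Real.log_pow]
    have := Real.log_two_lt_d9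
    norm_num at this ⊢
    linarith
  linarith

lemma exp_gamma_gt : (1.767176 : ℝ) < Real.exp Real.eulerMascheroniConstant := by
  have h1 : Real.exp 0.5693828 ≤ Real.exp Real.eulerMascheroniConstant :=
    Real.exp_le_exp.mpr gamma_gt.le
  refine lt_of_lt_of_le ?_ h1
  have h2 := Real.sum_le_exp_of_nonneg (by norm_num : (0:ℝ) ≤ 0.5693828) 12
  refine lt_of_lt_of_le ?_ h2
  simp_rw [Finset.sum_range_succ, Nat.factorial_succ]
  norm_num

def sUB : ℕ → ℕ → ℕ
| 0, _ => 0
| (d+1), r => (if r % (d+1) = 0 ∧ (d+1)*(d+1) ≤ r then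
    (d+1) + (if (d+1)*(d+1) < r then r/(d+1) else 0) else 0) + sUB d r

lemma sUB_eq (D r : ℕ) : sUB D r =
    ∑ d ∈ Finset.Icc 1 D, (if d ∣ r ∧ d*d ≤ r then d + (if d*d < r then r/d else 0) else 0) := by
  induction D with
  | zero => simp [sUB]
  | succ D ih =>
    rw [← Finset.insert_Icc_right_eq_Icc_add_one (by omega : 1 ≤ D+1), Finset.sum_insert (by simp)]
    rw [show sUB (D+1) r = (if r % (D+1) = 0 ∧ (D+1)*(D+1) ≤ r then
      (D+1) + (if (D+1)*(D+1) < r then r/(D+1) else 0) else 0) + sUB D r from rfl, ih]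
    congr 1
    simp [Nat.dvd_iff_mod_eq_zero]

lemma sigma_le_sUB (r D : ℕ) (hr : 0 < r) (hD : r ≤ D*D) :
    ArithmeticFunction.sigma 1 r ≤ sUB D r := by
  rw [ArithmeticFunction.sigma_one_apply, sUB_eq]
  have hr0 : r ≠ 0 := hr.ne'
  set A := r.divisors.filter (fun e => e*e ≤ r) with hA
  set A' := r.divisors.filter (fun e => e*e < r) with hA'
  set B := r.divisors.filter (fun e => ¬ (e*e ≤ r)) with hB
  have hsplit : ∑ e ∈ r.divisors, e = ∑ e ∈ A, e + ∑ e ∈ B, e :=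
    (Finset.sum_filter_add_sum_filter_not _ _ _).symm
  have hBA : ∑ e ∈ B, e ≤ ∑ f ∈ A', r / f := by
    have h1 : ∑ e ∈ B, e = ∑ e ∈ B, r / (r / e) := by
      refine Finset.sum_congr rfl (fun e he => ?_)
      rw [Nat.div_div_self (Nat.mem_divisors.mp (Finset.mem_filter.mp he).1).1 hr0]
    have h2 : ∑ f ∈ B.image (fun e => r / e), r / f = ∑ e ∈ B, r / (r / e) := by
      refine Finset.sum_image ?_
      intro x hx y hy hxy
      have hx' := Nat.div_div_self (Nat.mem_divisors.mp (Finset.mem_filter.mp hx).1).1 hr0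
      have hy' := Nat.div_div_self (Nat.mem_divisors.mp (Finset.mem_filter.mp hy).1).1 hr0
      calc x = r / (r / x) := hx'.symm
        _ = r / (r / y) := by rw [show r / x = r / y from hxy]
        _ = y := hy'
    rw [h1, ← h2]
    refine Finset.sum_le_sum_of_subset_of_nonneg ?_ (fun _ _ _ => Nat.zero_le _)
    intro f hf
    obtain ⟨e, he, rfl⟩ := Finset.mem_image.mp hf
    obtain ⟨hednd, hegt⟩ := Finset.mem_filter.mp he
    obtain ⟨hed, _⟩ := Nat.mem_divisors.mp hednd
    push_neg at hegt
    have hepos : 0 < e := Nat.pos_of_dvd_of_pos hed hr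
    have hfd : r / e ∣ r := Nat.div_dvd_of_dvd hed
    have hfe : r / e * e = r := Nat.div_mul_cancel hed
    have hflt : r / e < e := by
      by_contra hc
      push_neg at hc
      nlinarith
    have hfpos : 0 < r / e := Nat.div_pos (Nat.le_of_dvd hr hed) hepos
    refine Finset.mem_filter.mpr ⟨Nat.mem_divisors.mpr ⟨hfd, hr0⟩, ?_⟩
    nlinarith
  have hA'A : ∑ f ∈ A', r / f = ∑ e ∈ A, (if e*e < r then r / e else 0) := by
    rw [hA, hA', Finset.sum_filter, Finset.sum_filter]
    refine Finset.sum_congr rfl (fun e _ => ?_)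
    rcases lt_trichotomy (e*e) r with h | h | h
    · simp [h, h.le]
    · simp [h]
    · simp [h.not_gt, (by omega : ¬ (e*e ≤ r))]
  have hfinal : ∑ e ∈ A, e + ∑ e ∈ A, (if e*e < r then r / e else 0)
      ≤ ∑ d ∈ Finset.Icc 1 D, (if d ∣ r ∧ d*d ≤ r then d + (if d*d < r then r/d else 0) else 0) := by
    rw [← Finset.sum_add_distrib, ← Finset.sum_filter]
    refine Finset.sum_le_sum_of_subset_of_nonneg ?_ (fun _ _ _ => Nat.zero_le _)
    intro e he
    obtain ⟨hednd, hele⟩ := Finset.mem_filter.mp he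
    obtain ⟨hed, _⟩ := Nat.mem_divisors.mp hednd
    have hepos : 0 < e := Nat.pos_of_dvd_of_pos hed hr
    have heD : e ≤ D := by nlinarith
    exact Finset.mem_filter.mpr ⟨Finset.mem_Icc.mpr ⟨hepos, heD⟩, hed, hele⟩
  omega

def loopChk (K lo : ℕ) : ℕ → Bool
| 0 => true
| (n+1) => (Nat.ble (12 * sUB 71 (lo+n) * 10000000) (K*(lo+n))) && loopChk K lo n

lemma loopChk_spec (K lo : ℕ) : ∀ n, loopChk K lo n = true →
    ∀ i, i < n → 12 * sUB 71 (lo+i) * 10000000 ≤ K*(lo+i) := by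
  intro n
  induction n with
  | zero => intro _ i hi; omega
  | succ n ih =>
    intro h i hi
    rw [show loopChk K lo (n+1) = ((Nat.ble (12 * sUB 71 (lo+n) * 10000000) (K*(lo+n)))
      && loopChk K lo n) from rfl, Bool.and_eq_true] at h
    rcases Nat.lt_succ_iff_lt_or_eq.mp hi with h' | rfl
    · exact ih h.2 i h'
    · exact Nat.le_of_ble_eq_true h.1

lemma chunk (K lo n r : ℕ) (h : loopChk K lo n = true) (h1 : lo ≤ r) (h2 : r < lo + n) :
    12 * sUB 71 r * 10000000 ≤ K * r := by
  have := loopChk_spec K lo n h (r - lo) (by omega)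
  rwa [Nat.add_sub_cancel' h1] at this

lemma sigma_mul_prime_le (p r : ℕ) (hp : p.Prime) (hr : 0 < r) :
    ArithmeticFunction.sigma 1 (p * r) ≤ (p + 1) * ArithmeticFunction.sigma 1 r := by
  rw [ArithmeticFunction.sigma_one_apply, ArithmeticFunction.sigma_one_apply]
  have hpr0 : p * r ≠ 0 := Nat.mul_ne_zero hp.pos.ne' hr.ne'
  have hsub : (p*r).divisors ⊆ r.divisors ∪ r.divisors.image (fun d => p * d) := by
    intro d hd
    obtain ⟨hdvd, _⟩ := Nat.mem_divisors.mp hd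
    by_cases hpd : p ∣ d
    · obtain ⟨e, rfl⟩ := hpd
      have he : e ∣ r := (mul_dvd_mul_iff_left hp.pos.ne').mp hdvd
      exact Finset.mem_union_right _ (Finset.mem_image.mpr
        ⟨e, Nat.mem_divisors.mpr ⟨he, hr.ne'⟩, rfl⟩)
    · have hcop : Nat.Coprime p d := (hp.coprime_iff_not_dvd).mpr hpd
      exact Finset.mem_union_left _ (Nat.mem_divisors.mpr
        ⟨hcop.symm.dvd_of_dvd_mul_left hdvd, hr.ne'⟩)
  calc ∑ d ∈ (p*r).divisors, d ≤ ∑ d ∈ r.divisors ∪ r.divisors.image (fun d => p * d), d :=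
        Finset.sum_le_sum_of_subset hsub
    _ ≤ ∑ d ∈ r.divisors, d + ∑ d ∈ r.divisors.image (fun d => p * d), d := by
        rw [← Finset.union_sdiff_self_eq_union, Finset.sum_union Finset.disjoint_sdiff]
        exact Nat.add_le_add_left (Finset.sum_le_sum_of_subset Finset.sdiff_subset) _
    _ ≤ ∑ d ∈ r.divisors, d + p * ∑ d ∈ r.divisors, d := by
        have : ∑ d ∈ r.divisors.image (fun d => p * d), d = ∑ d ∈ r.divisors, p * d :=
          Finset.sum_image (fun x _ y _ h => Nat.eq_of_mul_eq_mul_left hp.pos h)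
        rw [this, Finset.mul_sum]
    _ = (p + 1) * ∑ d ∈ r.divisors, d := by ring


lemma blk0 : ((1251764533 : ℝ)/1000000000) ≤ Real.log (Real.log (33 : ℝ)) := by
  have h1 : ((87412689 : ℝ)/25000000) ≤ Real.log (33 : ℝ) :=
    log_ge_aux _ 5 (((1 : ℝ)/32)) _ (by norm_num) (by rw [abs_le]; constructor <;> norm_num) (by norm_num)
  have h2 : ((1251764533 : ℝ)/1000000000) ≤ Real.log ((87412689 : ℝ)/25000000) :=
    log_ge_aux _ 2 ((-((12587311 : ℝ)/100000000))) _ (by norm_num) (by rw [abs_le]; constructor <;> norm_num) (by norm_num)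
  exact h2.trans (Real.log_le_log (by norm_num) h1)

lemma blk1 : ((63428417 : ℝ)/40000000) ≤ Real.log (Real.log (132 : ℝ)) := by
  have h1 : ((3814689 : ℝ)/781250) ≤ Real.log (132 : ℝ) :=
    log_ge_aux _ 7 (((1 : ℝ)/32)) _ (by norm_num) (by rw [abs_le]; constructor <;> norm_num) (by norm_num)
  have h2 : ((63428417 : ℝ)/40000000) ≤ Real.log ((3814689 : ℝ)/781250) :=
    log_ge_aux _ 2 (((689689 : ℝ)/3125000)) _ (by norm_num) (by rw [abs_le]; constructor <;> norm_num) (by norm_num)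
  exact h2.trans (Real.log_le_log (by norm_num) h1)

lemma blk2 : ((1835624949 : ℝ)/1000000000) ≤ Real.log (Real.log (528 : ℝ)) := by
  have h1 : ((6269096281 : ℝ)/1000000000) ≤ Real.log (528 : ℝ) :=
    log_ge_aux _ 9 (((1 : ℝ)/32)) _ (by norm_num) (by rw [abs_le]; constructor <;> norm_num) (by norm_num)
  have h2 : ((1835624949 : ℝ)/1000000000) ≤ Real.log ((6269096281 : ℝ)/1000000000) :=
    log_ge_aux _ 3 ((-((1730903719 : ℝ)/8000000000))) _ (by norm_num) (by rw [abs_le]; constructor <;> norm_num) (by norm_num)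
  exact h2.trans (Real.log_le_log (by norm_num) h1)

lemma blk3 : ((1972038731 : ℝ)/1000000000) ≤ Real.log (Real.log (1320 : ℝ)) := by
  have h1 : ((359265531 : ℝ)/50000000) ≤ Real.log (1320 : ℝ) :=
    log_ge_aux _ 10 (((37 : ℝ)/128)) _ (by norm_num) (by rw [abs_le]; constructor <;> norm_num) (by norm_num)
  have h2 : ((1972038731 : ℝ)/1000000000) ≤ Real.log ((359265531 : ℝ)/50000000) :=
    log_ge_aux _ 3 ((-((40734469 : ℝ)/400000000))) _ (by norm_num) (by rw [abs_le]; constructor <;> norm_num) (by norm_num)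
  exact h2.trans (Real.log_le_log (by norm_num) h1)

lemma blk4 : ((1057162929 : ℝ)/500000000) ≤ Real.log (Real.log (3960 : ℝ)) := by
  have h1 : ((8283999301 : ℝ)/1000000000) ≤ Real.log (3960 : ℝ) :=
    log_ge_aux _ 12 ((-((17 : ℝ)/512))) _ (by norm_num) (by rw [abs_le]; constructor <;> norm_num) (by norm_num)
  have h2 : ((1057162929 : ℝ)/500000000) ≤ Real.log ((8283999301 : ℝ)/1000000000) :=
    log_ge_aux _ 3 (((283999301 : ℝ)/8000000000)) _ (by norm_num) (by rw [abs_le]; constructor <;> norm_num) (by norm_num)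
  exact h2.trans (Real.log_le_log (by norm_num) h1)

lemma blk5 : ((2211707499 : ℝ)/1000000000) ≤ Real.log (Real.log (9240 : ℝ)) := by
  have h1 : ((9131297049 : ℝ)/1000000000) ≤ Real.log (9240 : ℝ) :=
    log_ge_aux _ 13 (((131 : ℝ)/1024)) _ (by norm_num) (by rw [abs_le]; constructor <;> norm_num) (by norm_num)
  have h2 : ((2211707499 : ℝ)/1000000000) ≤ Real.log ((9131297049 : ℝ)/1000000000) :=
    log_ge_aux _ 3 (((1131297049 : ℝ)/8000000000)) _ (by norm_num) (by rw [abs_le]; constructor <;> norm_num) (by norm_num)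
  exact h2.trans (Real.log_le_log (by norm_num) h1)

lemma blk6 : ((2325258599 : ℝ)/1000000000) ≤ Real.log (Real.log (27720 : ℝ)) := by
  have h1 : ((5114954483 : ℝ)/500000000) ≤ Real.log (27720 : ℝ) :=
    log_ge_aux _ 15 ((-((631 : ℝ)/4096))) _ (by norm_num) (by rw [abs_le]; constructor <;> norm_num) (by norm_num)
  have h2 : ((2325258599 : ℝ)/1000000000) ≤ Real.log ((5114954483 : ℝ)/500000000) :=
    log_ge_aux _ 3 (((1114954483 : ℝ)/4000000000)) _ (by norm_num) (by rw [abs_le]; constructor <;> norm_num) (by norm_num)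
  exact h2.trans (Real.log_le_log (by norm_num) h1)

lemma blk7 : ((2390376343 : ℝ)/1000000000) ≤ Real.log (Real.log (55440 : ℝ)) := by
  have h1 : ((5461528073 : ℝ)/500000000) ≤ Real.log (55440 : ℝ) :=
    log_ge_aux _ 16 ((-((631 : ℝ)/4096))) _ (by norm_num) (by rw [abs_le]; constructor <;> norm_num) (by norm_num)
  have h2 : ((2390376343 : ℝ)/1000000000) ≤ Real.log ((5461528073 : ℝ)/500000000) :=
    log_ge_aux _ 3 (((1461528073 : ℝ)/4000000000)) _ (by norm_num) (by rw [abs_le]; constructor <;> norm_num) (by norm_num)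
  exact h2.trans (Real.log_le_log (by norm_num) h1)

set_option maxRecDepth 100000 in
set_option maxHeartbeats 2000000 in
lemma chk0_0 : loopChk 243329706 3 9 = true := by decide

set_option maxRecDepth 100000 in
set_option maxHeartbeats 2000000 in
lemma chk1_0 : loopChk 308245234 12 36 = true := by decide

set_option maxRecDepth 100000 in
set_option maxHeartbeats 2000000 in
lemma chk2_0 : loopChk 356825959 48 72 = true := by decide

set_option maxRecDepth 100000 in
set_option maxHeartbeats 2000000 in
lemma chk3_0 : loopChk 383343346 120 240 = true := by decide

set_option maxRecDepth 100000 in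
set_option maxHeartbeats 2000000 in
lemma chk4_0 : loopChk 411002450 360 480 = true := by decide

set_option maxRecDepth 100000 in
set_option maxHeartbeats 2000000 in
lemma chk5_0 : loopChk 429932405 840 640 = true := by decide

set_option maxRecDepth 100000 in
set_option maxHeartbeats 2000000 in
lemma chk5_1 : loopChk 429932405 1480 640 = true := by decide

set_option maxRecDepth 100000 in
set_option maxHeartbeats 2000000 in
lemma chk5_2 : loopChk 429932405 2120 400 = true := by decide

set_option maxRecDepth 100000 in
set_option maxHeartbeats 2000000 in
lemma chk6_0 : loopChk 452005530 2520 640 = true := by decide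

set_option maxRecDepth 100000 in
set_option maxHeartbeats 2000000 in
lemma chk6_1 : loopChk 452005530 3160 640 = true := by decide

set_option maxRecDepth 100000 in
set_option maxHeartbeats 2000000 in
lemma chk6_2 : loopChk 452005530 3800 640 = true := by decide

set_option maxRecDepth 100000 in
set_option maxHeartbeats 2000000 in
lemma chk6_3 : loopChk 452005530 4440 600 = true := by decide

set_option maxRecDepth 100000 in
set_option maxHeartbeats 2000000 in
lemma chk7_0 : loopChk 464663727 5040 1 = true := by decide

set_option maxHeartbeats 1600000 in
lemma per_r (r : ℕ) (h3 : 3 ≤ r) (hr : r ≤ 5040) :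
    ∃ q : ℝ, 0 < q ∧ q ≤ Real.log (Real.log (11 * (r:ℝ))) ∧
      12 * ((ArithmeticFunction.sigma 1 r : ℕ) : ℝ) ≤ 11 * 1.767176 * q * r := by
  have hrR : (3:ℝ) ≤ (r:ℝ) := by exact_mod_cast h3
  have hrR0 : (0:ℝ) ≤ (r:ℝ) := by positivity
  by_cases hc0 : r ≤ 11
  · have hmR : (3:ℝ) ≤ (r:ℝ) := by
        have : 3 ≤ r := by omega
        exact_mod_cast this
    refine ⟨((1251764533 : ℝ)/1000000000), by norm_num, ?_, ?_⟩
    · refine le_trans blk0 (loglog_mono _ _ (by norm_num) ?_)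
      linarith
    · have hnat : 12 * sUB 71 r * 10000000 ≤ 243329706 * r := by
        exact chunk _ _ _ _ chk0_0 (by omega) (by omega)
      have hsig : ArithmeticFunction.sigma 1 r ≤ sUB 71 r := sigma_le_sUB r 71 (by omega) (by omega)
      have hN : 12 * (ArithmeticFunction.sigma 1 r) * 10000000 ≤ 243329706 * r := by
        linarith
      have hNR : 12 * ((ArithmeticFunction.sigma 1 r : ℕ):ℝ) * 10000000 ≤ (243329706:ℝ) * r := by
        exact_mod_cast hN
      have hKq : (243329706:ℝ) ≤ 11 * 1.767176 * ((1251764533 : ℝ)/1000000000) * 10000000 := by norm_num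
      linarith [mul_le_mul_of_nonneg_right hKq hrR0]
  by_cases hc1 : r ≤ 47
  · have hmR : (12:ℝ) ≤ (r:ℝ) := by
        have : 12 ≤ r := by omega
        exact_mod_cast this
    refine ⟨((63428417 : ℝ)/40000000), by norm_num, ?_, ?_⟩
    · refine le_trans blk1 (loglog_mono _ _ (by norm_num) ?_)
      linarith
    · have hnat : 12 * sUB 71 r * 10000000 ≤ 308245234 * r := by
        exact chunk _ _ _ _ chk1_0 (by omega) (by omega)
      have hsig : ArithmeticFunction.sigma 1 r ≤ sUB 71 r := sigma_le_sUB r 71 (by omega) (by omega)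
      have hN : 12 * (ArithmeticFunction.sigma 1 r) * 10000000 ≤ 308245234 * r := by
        linarith
      have hNR : 12 * ((ArithmeticFunction.sigma 1 r : ℕ):ℝ) * 10000000 ≤ (308245234:ℝ) * r := by
        exact_mod_cast hN
      have hKq : (308245234:ℝ) ≤ 11 * 1.767176 * ((63428417 : ℝ)/40000000) * 10000000 := by norm_num
      linarith [mul_le_mul_of_nonneg_right hKq hrR0]
  by_cases hc2 : r ≤ 119
  · have hmR : (48:ℝ) ≤ (r:ℝ) := by
        have : 48 ≤ r := by omega
        exact_mod_cast this
    refine ⟨((1835624949 : ℝ)/1000000000), by norm_num, ?_, ?_⟩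
    · refine le_trans blk2 (loglog_mono _ _ (by norm_num) ?_)
      linarith
    · have hnat : 12 * sUB 71 r * 10000000 ≤ 356825959 * r := by
        exact chunk _ _ _ _ chk2_0 (by omega) (by omega)
      have hsig : ArithmeticFunction.sigma 1 r ≤ sUB 71 r := sigma_le_sUB r 71 (by omega) (by omega)
      have hN : 12 * (ArithmeticFunction.sigma 1 r) * 10000000 ≤ 356825959 * r := by
        linarith
      have hNR : 12 * ((ArithmeticFunction.sigma 1 r : ℕ):ℝ) * 10000000 ≤ (356825959:ℝ) * r := by
        exact_mod_cast hN
      have hKq : (356825959:ℝ) ≤ 11 * 1.767176 * ((1835624949 : ℝ)/1000000000) * 10000000 := by norm_num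
      linarith [mul_le_mul_of_nonneg_right hKq hrR0]
  by_cases hc3 : r ≤ 359
  · have hmR : (120:ℝ) ≤ (r:ℝ) := by
        have : 120 ≤ r := by omega
        exact_mod_cast this
    refine ⟨((1972038731 : ℝ)/1000000000), by norm_num, ?_, ?_⟩
    · refine le_trans blk3 (loglog_mono _ _ (by norm_num) ?_)
      linarith
    · have hnat : 12 * sUB 71 r * 10000000 ≤ 383343346 * r := by
        exact chunk _ _ _ _ chk3_0 (by omega) (by omega)
      have hsig : ArithmeticFunction.sigma 1 r ≤ sUB 71 r := sigma_le_sUB r 71 (by omega) (by omega)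
      have hN : 12 * (ArithmeticFunction.sigma 1 r) * 10000000 ≤ 383343346 * r := by
        linarith
      have hNR : 12 * ((ArithmeticFunction.sigma 1 r : ℕ):ℝ) * 10000000 ≤ (383343346:ℝ) * r := by
        exact_mod_cast hN
      have hKq : (383343346:ℝ) ≤ 11 * 1.767176 * ((1972038731 : ℝ)/1000000000) * 10000000 := by norm_num
      linarith [mul_le_mul_of_nonneg_right hKq hrR0]
  by_cases hc4 : r ≤ 839
  · have hmR : (360:ℝ) ≤ (r:ℝ) := by
        have : 360 ≤ r := by omega
        exact_mod_cast this
    refine ⟨((1057162929 : ℝ)/500000000), by norm_num, ?_, ?_⟩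
    · refine le_trans blk4 (loglog_mono _ _ (by norm_num) ?_)
      linarith
    · have hnat : 12 * sUB 71 r * 10000000 ≤ 411002450 * r := by
        exact chunk _ _ _ _ chk4_0 (by omega) (by omega)
      have hsig : ArithmeticFunction.sigma 1 r ≤ sUB 71 r := sigma_le_sUB r 71 (by omega) (by omega)
      have hN : 12 * (ArithmeticFunction.sigma 1 r) * 10000000 ≤ 411002450 * r := by
        linarith
      have hNR : 12 * ((ArithmeticFunction.sigma 1 r : ℕ):ℝ) * 10000000 ≤ (411002450:ℝ) * r := by
        exact_mod_cast hN
      have hKq : (411002450:ℝ) ≤ 11 * 1.767176 * ((1057162929 : ℝ)/500000000) * 10000000 := by norm_num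
      linarith [mul_le_mul_of_nonneg_right hKq hrR0]
  by_cases hc5 : r ≤ 2519
  · have hmR : (840:ℝ) ≤ (r:ℝ) := by
        have : 840 ≤ r := by omega
        exact_mod_cast this
    refine ⟨((2211707499 : ℝ)/1000000000), by norm_num, ?_, ?_⟩
    · refine le_trans blk5 (loglog_mono _ _ (by norm_num) ?_)
      linarith
    · have hnat : 12 * sUB 71 r * 10000000 ≤ 429932405 * r := by
        by_cases hcc0 : r < 1480
        · exact chunk _ _ _ _ chk5_0 (by omega) (by omega)
        by_cases hcc1 : r < 2120
        · exact chunk _ _ _ _ chk5_1 (by omega) (by omega)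
        exact chunk _ _ _ _ chk5_2 (by omega) (by omega)
      have hsig : ArithmeticFunction.sigma 1 r ≤ sUB 71 r := sigma_le_sUB r 71 (by omega) (by omega)
      have hN : 12 * (ArithmeticFunction.sigma 1 r) * 10000000 ≤ 429932405 * r := by
        linarith
      have hNR : 12 * ((ArithmeticFunction.sigma 1 r : ℕ):ℝ) * 10000000 ≤ (429932405:ℝ) * r := by
        exact_mod_cast hN
      have hKq : (429932405:ℝ) ≤ 11 * 1.767176 * ((2211707499 : ℝ)/1000000000) * 10000000 := by norm_num
      linarith [mul_le_mul_of_nonneg_right hKq hrR0]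
  by_cases hc6 : r ≤ 5039
  · have hmR : (2520:ℝ) ≤ (r:ℝ) := by
        have : 2520 ≤ r := by omega
        exact_mod_cast this
    refine ⟨((2325258599 : ℝ)/1000000000), by norm_num, ?_, ?_⟩
    · refine le_trans blk6 (loglog_mono _ _ (by norm_num) ?_)
      linarith
    · have hnat : 12 * sUB 71 r * 10000000 ≤ 452005530 * r := by
        by_cases hcc0 : r < 3160
        · exact chunk _ _ _ _ chk6_0 (by omega) (by omega)
        by_cases hcc1 : r < 3800
        · exact chunk _ _ _ _ chk6_1 (by omega) (by omega)
        by_cases hcc2 : r < 4440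
        · exact chunk _ _ _ _ chk6_2 (by omega) (by omega)
        exact chunk _ _ _ _ chk6_3 (by omega) (by omega)
      have hsig : ArithmeticFunction.sigma 1 r ≤ sUB 71 r := sigma_le_sUB r 71 (by omega) (by omega)
      have hN : 12 * (ArithmeticFunction.sigma 1 r) * 10000000 ≤ 452005530 * r := by
        linarith
      have hNR : 12 * ((ArithmeticFunction.sigma 1 r : ℕ):ℝ) * 10000000 ≤ (452005530:ℝ) * r := by
        exact_mod_cast hN
      have hKq : (452005530:ℝ) ≤ 11 * 1.767176 * ((2325258599 : ℝ)/1000000000) * 10000000 := by norm_num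
      linarith [mul_le_mul_of_nonneg_right hKq hrR0]
  have hmR : (5040:ℝ) ≤ (r:ℝ) := by
      have : 5040 ≤ r := by omega
      exact_mod_cast this
  refine ⟨((2390376343 : ℝ)/1000000000), by norm_num, ?_, ?_⟩
  · refine le_trans blk7 (loglog_mono _ _ (by norm_num) ?_)
    linarith
  · have hnat : 12 * sUB 71 r * 10000000 ≤ 464663727 * r := by
      exact chunk _ _ _ _ chk7_0 (by omega) (by omega)
    have hsig : ArithmeticFunction.sigma 1 r ≤ sUB 71 r := sigma_le_sUB r 71 (by omega) (by omega)
    have hN : 12 * (ArithmeticFunction.sigma 1 r) * 10000000 ≤ 464663727 * r := by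
      linarith
    have hNR : 12 * ((ArithmeticFunction.sigma 1 r : ℕ):ℝ) * 10000000 ≤ (464663727:ℝ) * r := by
      exact_mod_cast hN
    have hKq : (464663727:ℝ) ≤ 11 * 1.767176 * ((2390376343 : ℝ)/1000000000) * 10000000 := by norm_num
    linarith [mul_le_mul_of_nonneg_right hKq hrR0]

theorem G_mul_large_prime_lt (r p : ℕ) (hr : r ≤ 5040)
    (hG : Real.exp Real.eulerMascheroniConstant ≤ G r)
    (hp : p.Prime) (hp11 : 11 ≤ p) :
    G (p * r) < Real.exp Real.eulerMascheroniConstant := by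
  rcases Nat.lt_or_ge r 3 with h3 | h3
  · exfalso
    interval_cases r
    · have h0 : G 0 = 0 := by simp [G]
      rw [h0] at hG
      exact (Real.exp_pos _).not_ge hG
    · have h1 : G 1 = 0 := by simp [G]
      rw [h1] at hG
      exact (Real.exp_pos _).not_ge hG
    · have hσ2 : ArithmeticFunction.sigma 1 2 = 3 := by
        rw [ArithmeticFunction.sigma_one_apply]; decide
      have hlt : Real.log (Real.log 2) < 0 :=
        Real.log_neg (Real.log_pos one_lt_two) (by have := Real.log_two_lt_d9; norm_num at this ⊢; linarith)
      have h2 : G 2 ≤ 0 := by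
        rw [G, hσ2]
        apply div_nonpos_of_nonneg_of_nonpos (by norm_num)
        push_cast
        nlinarith
      exact (Real.exp_pos _).not_ge (hG.trans h2)
  · obtain ⟨q, hq0, hqle, hqs⟩ := per_r r h3 hr
    have hr0 : 0 < r := by omega
    have hp0 : 0 < p := hp.pos
    have hpR : (11:ℝ) ≤ (p:ℝ) := by exact_mod_cast hp11
    have hrR : (3:ℝ) ≤ (r:ℝ) := by exact_mod_cast h3
    have hprR : ((p*r : ℕ):ℝ) = (p:ℝ) * (r:ℝ) := by push_cast; ring
    have hX : q ≤ Real.log (Real.log ((p*r:ℕ):ℝ)) := by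
      refine hqle.trans (loglog_mono _ _ (by linarith) ?_)
      rw [hprR]
      nlinarith
    have hXpos : 0 < Real.log (Real.log ((p*r:ℕ):ℝ)) := lt_of_lt_of_le hq0 hX
    have hprpos : (0:ℝ) < ((p*r:ℕ):ℝ) := by
      rw [hprR]; positivity
    have hden : (0:ℝ) < ((p*r:ℕ):ℝ) * Real.log (Real.log ((p*r:ℕ):ℝ)) :=
      mul_pos hprpos hXpos
    have key : G (p*r) ≤ 1.767176 := by
      rw [G, div_le_iff₀ hden]
      have h1 : ((ArithmeticFunction.sigma 1 (p*r) : ℕ):ℝ) ≤ ((p:ℝ)+1) * ((ArithmeticFunction.sigma 1 r : ℕ):ℝ) := by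
        have := sigma_mul_prime_le p r hp hr0
        exact_mod_cast this
      set T := ((ArithmeticFunction.sigma 1 r : ℕ):ℝ) with hT
      have hT0 : 0 ≤ T := by positivity
      set X := Real.log (Real.log ((p*r:ℕ):ℝ)) with hXdef
      -- (p+1)*T ≤ (12/11)*p*T ; 12*T ≤ 11*1.767176*q*r ; q ≤ X
      have c2 : 11*(((p:ℝ)+1)*T) ≤ 12*((p:ℝ)*T) := by nlinarith [mul_nonneg (by linarith : (0:ℝ) ≤ (p:ℝ) - 11) hT0]
      have c3 : (p:ℝ)*(12*T) ≤ (p:ℝ)*(11 * 1.767176 * q * r) :=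
        mul_le_mul_of_nonneg_left hqs (by linarith)
      have c4 : 1.767176*((p:ℝ)*q*(r:ℝ)) ≤ 1.767176*(((p*r:ℕ):ℝ)*X) := by
        rw [hprR]
        nlinarith [mul_nonneg (mul_nonneg (by linarith : (0:ℝ) ≤ (p:ℝ)) (by linarith : (0:ℝ) ≤ (r:ℝ))) (le_of_lt hq0)]
      nlinarith
    exact lt_of_le_of_lt key exp_gamma_gt
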